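/- Let s ∈ ℝ, 0 < p ≤ u ≤ ∞ and q ∈ (0,∞). Then the Besov–Morrey space N^s_{u,p,q}(ℝ^n) embeds continuously into the Besov-type space B^{s, 1/p − 1/u}_{p,q}(ℝ^n). -/

import Mathlib

open MeasureTheory ENNReal

noncomputable section

abbrev Euc (n : ℕ) := EuclideanSpace ℝ (Fin n)

/-- A function is radial if its value depends only on the norm. -/
def IsRadial {n : ℕ} {α : Type*} (f : Euc n → α) : Prop :=
  ∀ x y : Euc n, ‖x‖ = ‖y‖ → f x = f y

noncomputable def convFn {n : ℕ} (g f : Euc n → ℂ) (x : Euc n) : ℂ :=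
  ∫ y, g y * f (x - y)

noncomputable def dil (n : ℕ) (φ : Euc n → ℂ) (j : ℕ) : Euc n → ℂ :=
  fun x => (((2:ℝ) ^ ((j:ℝ) * n) : ℝ) : ℂ) * φ ((2:ℝ) ^ (j:ℝ) • x)

/-- The Littlewood–Paley piece `φ_j * f` (`Φ * f` if `j = 0`). -/
noncomputable def lpPiece (n : ℕ) (Φ φ f : Euc n → ℂ) (j : ℕ) : Euc n → ℂ :=
  if j = 0 then convFn Φ f else convFn (dil n φ j) f

/-- The dyadic cube `2^{-m}([0,1)^n + k)`. -/
def dyadicCube (n : ℕ) (m : ℤ) (k : Fin n → ℤ) : Set (Euc n) :=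
  {x | ∀ i, (k i : ℝ) ≤ 2 ^ (m : ℝ) * x i ∧ 2 ^ (m : ℝ) * x i < k i + 1}

/-- `ℓ^q`-quasinorm of a sequence in `[0,∞]`, `q ∈ (0,∞]`. -/
noncomputable def ellq (q : ℝ≥0∞) (a : ℕ → ℝ≥0∞) : ℝ≥0∞ :=
  if q = ∞ then ⨆ j, a j else (∑' j, a j ^ q.toReal) ^ (1 / q.toReal)

/-- The Besov-type norm `‖f‖_{B^{s,τ}_{p,q}}` w.r.t. the dyadic resolution `(Φ, φ)`:
`sup_P |P|^{-τ} ( ∑_{j ≥ max(j_P,0)} 2^{jsq} (∫_P |φ_j * f|^p)^{q/p} )^{1/q}`. -/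
noncomputable def besovTypeNorm (n : ℕ) (s τ p : ℝ) (q : ℝ≥0∞)
    (Φ φ f : Euc n → ℂ) : ℝ≥0∞ :=
  ⨆ (m : ℤ) (k : Fin n → ℤ),
    ENNReal.ofReal ((2:ℝ) ^ ((m:ℝ) * n * τ)) *
      ellq q (fun j => if m ≤ (j : ℤ) then
        ENNReal.ofReal ((2:ℝ) ^ ((j:ℝ) * s)) *
          (∫⁻ x in dyadicCube n m k, ENNReal.ofReal (‖lpPiece n Φ φ f j x‖ ^ p)) ^ (1/p)
        else 0)

/-- Admissible pair of generators for the dyadic resolution of unity. -/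
structure AdmissiblePair (n : ℕ) (Φ φ : Euc n → ℂ) : Prop where
  schwartzPhi : ∃ F : SchwartzMap (Euc n) ℂ, ⇑F = Φ
  schwartzphi : ∃ F : SchwartzMap (Euc n) ℂ, ⇑F = φ
  suppPhi : ∀ ξ : Euc n, 2 < ‖ξ‖ → FourierTransform.fourier Φ ξ = 0
  lowerPhi : ∃ c : ℝ, 0 < c ∧ ∀ ξ : Euc n, ‖ξ‖ ≤ 5/3 → c ≤ ‖FourierTransform.fourier Φ ξ‖
  suppphi : ∀ ξ : Euc n, ‖ξ‖ < 1/2 ∨ 2 < ‖ξ‖ → FourierTransform.fourier φ ξ = 0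
  lowerphi : ∃ c : ℝ, 0 < c ∧ ∀ ξ : Euc n, 3/5 ≤ ‖ξ‖ → ‖ξ‖ ≤ 5/3 →
    c ≤ ‖FourierTransform.fourier φ ξ‖

/-- Morrey norm `‖f‖_{M^u_p}` (with `p, u ∈ (0,∞]`, convention `1/∞ = 0`). -/
noncomputable def morreyNorm (n : ℕ) (p u : ℝ≥0∞) (f : Euc n → ℂ) : ℝ≥0∞ :=
  ⨆ (c : Euc n) (r : ℝ) (_ : 0 < r),
    volume (Metric.ball c r) ^ (1 / u.toReal - 1 / p.toReal) *
      (∫⁻ y in Metric.ball c r, ENNReal.ofReal (‖f y‖ ^ p.toReal)) ^ (1 / p.toReal)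

/-- The Besov–Morrey norm `‖f‖_{N^s_{u,p,q}}` w.r.t. `(Φ, φ)`. -/
noncomputable def besovMorreyNorm (n : ℕ) (s : ℝ) (p u q : ℝ≥0∞)
    (Φ φ f : Euc n → ℂ) : ℝ≥0∞ :=
  ellq q (fun j =>
    ENNReal.ofReal ((2:ℝ) ^ ((j:ℝ) * s)) * morreyNorm n p u (lpPiece n Φ φ f j))


theorem ellq_mono' {q : ℝ≥0∞} {a b : ℕ → ℝ≥0∞} (h : ∀ j, a j ≤ b j) :
    ellq q a ≤ ellq q b := by
  unfold ellq
  split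
  · exact iSup_mono h
  · exact ENNReal.rpow_le_rpow (ENNReal.tsum_le_tsum fun j =>
      ENNReal.rpow_le_rpow (h j) ENNReal.toReal_nonneg) (by positivity)

theorem ellq_const_mul' {q : ℝ≥0∞} (hq : q ≠ 0) (hq' : q ≠ ∞) (c : ℝ≥0∞) (a : ℕ → ℝ≥0∞) :
    ellq q (fun j => c * a j) = c * ellq q a := by
  have ht : q.toReal ≠ 0 := ENNReal.toReal_ne_zero.mpr ⟨hq, hq'⟩
  unfold ellq
  rw [if_neg hq', if_neg hq']
  simp_rw [ENNReal.mul_rpow_of_nonneg _ _ ENNReal.toReal_nonneg, ENNReal.tsum_mul_left,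
    ENNReal.mul_rpow_of_nonneg _ _ (by positivity : (0:ℝ) ≤ 1/q.toReal),
    ← ENNReal.rpow_mul, mul_one_div_cancel ht, ENNReal.rpow_one]

/-- For `q ∈ (0,∞)`, `N^s_{u,p,q}(ℝ^n)` embeds continuously into
`B^{s, 1/p - 1/u}_{p,q}(ℝ^n)`. -/
theorem besovMorrey_embeds_besovType (n : ℕ) (s : ℝ) (p u q : ℝ≥0∞)
    (hp : 0 < p) (hpu : p ≤ u) (hu : u ≤ ∞) (hq : 0 < q) (hq' : q ≠ ∞)
    (Φ φ : Euc n → ℂ) (hpair : AdmissiblePair n Φ φ) :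
    ∃ C : ℝ≥0∞, C ≠ ∞ ∧
      ∀ f : Euc n → ℂ, LocallyIntegrable f volume →
        besovTypeNorm n s (1/p.toReal - 1/u.toReal) p.toReal q Φ φ f
          ≤ C * besovMorreyNorm n s p u q Φ φ f := by
  set τ : ℝ := 1/p.toReal - 1/u.toReal with hτdef
  have hτ : 0 ≤ τ := by
    rw [hτdef, sub_nonneg]
    rcases eq_or_ne u ∞ with hu' | hu'
    · rw [hu']
      simp only [ENNReal.toReal_top, one_div]
      norm_num
    · have hp' : p ≠ ∞ := fun h => hu' (top_le_iff.mp (h ▸ hpu))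
      exact one_div_le_one_div_of_le (ENNReal.toReal_pos hp.ne' hp')
        ((ENNReal.toReal_le_toReal hp' hu').mpr hpu)
  set V : ℝ≥0∞ := volume (Metric.ball (0 : Euc n) 1) with hVdef
  set C : ℝ≥0∞ := ENNReal.ofReal (((n:ℝ)+1) ^ ((n:ℝ)*τ)) * V ^ τ with hCdef
  refine ⟨C, ?_, ?_⟩
  · exact ENNReal.mul_ne_top ENNReal.ofReal_ne_top
      (ENNReal.rpow_ne_top_of_nonneg hτ measure_ball_lt_top.ne)
  intro f _
  unfold besovTypeNorm
  refine iSup_le fun m => iSup_le fun k => ?_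
  set r : ℝ := ((n:ℝ)+1) * (2:ℝ) ^ (-(m:ℝ)) with hrdef
  have hrpos : 0 < r := by positivity
  set c : Euc n := (WithLp.equiv 2 (Fin n → ℝ)).symm
      (fun i => ((k i : ℝ) + 1/2) * (2:ℝ) ^ (-(m:ℝ))) with hcdef
  have hsub : dyadicCube n m k ⊆ Metric.ball c r := by
    intro x hx
    set t : ℝ := (2:ℝ) ^ (m:ℝ) with htdef
    have ht : 0 < t := by positivity
    have hxi : ∀ i, |x i - c i| ≤ (2:ℝ) ^ (-(m:ℝ)) := by
      intro i
      obtain ⟨h1, h2⟩ := hx i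
      have hci : c i = ((k i : ℝ) + 1/2) * (2:ℝ) ^ (-(m:ℝ)) := rfl
      have hinv : (2:ℝ) ^ (-(m:ℝ)) = t⁻¹ := by
        rw [htdef, ← Real.rpow_neg (by norm_num)]
      have hxc : x i - c i = (t * x i - ((k i:ℝ) + 1/2)) / t := by
        rw [hci, hinv]
        field_simp
      have hb : |t * x i - ((k i:ℝ) + 1/2)| ≤ 1 := abs_le.mpr ⟨by linarith, by linarith⟩
      calc |x i - c i| = |t * x i - ((k i:ℝ)+1/2)| / t := by
            rw [hxc, abs_div, abs_of_pos ht]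
        _ ≤ 1 / t := by gcongr
        _ = (2:ℝ) ^ (-(m:ℝ)) := by rw [hinv, one_div]
    rw [Metric.mem_ball, EuclideanSpace.dist_eq]
    have hsq : ∀ i, dist (x i) (c i) ^ 2 ≤ ((2:ℝ)^(-(m:ℝ)))^2 := fun i => by
      rw [Real.dist_eq]
      exact pow_le_pow_left₀ (abs_nonneg _) (hxi i) 2
    have hsum : ∑ i, dist (x i) (c i) ^ 2 ≤ (n:ℝ) * ((2:ℝ)^(-(m:ℝ)))^2 := by
      calc ∑ i, dist (x i) (c i) ^ 2 ≤ Finset.univ.card • ((2:ℝ)^(-(m:ℝ)))^2 :=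
            Finset.sum_le_card_nsmul _ _ _ (fun i _ => hsq i)
        _ = (n:ℝ) * ((2:ℝ)^(-(m:ℝ)))^2 := by
            simp [nsmul_eq_mul]
    rw [Real.sqrt_lt' hrpos]
    have ha : (0:ℝ) < (2:ℝ)^(-(m:ℝ)) := by positivity
    have hr2 : r ^ 2 = ((n:ℝ)+1)^2 * ((2:ℝ)^(-(m:ℝ)))^2 := by rw [hrdef]; ring
    rw [hr2]
    nlinarith [sq_nonneg ((2:ℝ)^(-(m:ℝ))), ha]
  have hvol0 : volume (Metric.ball c r) ≠ 0 := (Metric.measure_ball_pos volume c hrpos).ne'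
  have hvolT : volume (Metric.ball c r) ≠ ∞ := measure_ball_lt_top.ne
  have hball : volume (Metric.ball c r) = ENNReal.ofReal (r ^ n) * V := by
    rw [hVdef, Measure.addHaar_ball_of_pos volume c hrpos, finrank_euclideanSpace_fin]
  have hrn : (0:ℝ) < r ^ n := by positivity
  have hre : (2:ℝ) ^ ((m:ℝ) * n * τ) * (r ^ n) ^ τ = ((n:ℝ)+1) ^ ((n:ℝ)*τ) := by
    have h2 : (0:ℝ) < 2 := by norm_num
    rw [← Real.rpow_natCast r n, ← Real.rpow_mul hrpos.le, hrdef,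
        Real.mul_rpow (by positivity) (by positivity),
        ← Real.rpow_mul h2.le]
    rw [show (2:ℝ) ^ ((m:ℝ)*n*τ) * (((n:ℝ)+1) ^ ((n:ℝ)*τ) * (2:ℝ) ^ (-(m:ℝ) * ((n:ℝ)*τ)))
        = ((n:ℝ)+1) ^ ((n:ℝ)*τ) * ((2:ℝ) ^ ((m:ℝ)*n*τ) * (2:ℝ) ^ (-(m:ℝ)*((n:ℝ)*τ))) from by
          ring,
        ← Real.rpow_add h2,
        show (m:ℝ)*n*τ + -(m:ℝ)*((n:ℝ)*τ) = 0 from by ring, Real.rpow_zero, mul_one]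
  have hkey : ENNReal.ofReal ((2:ℝ) ^ ((m:ℝ) * n * τ)) * (volume (Metric.ball c r)) ^ τ
      = C := by
    rw [hball, ENNReal.mul_rpow_of_nonneg _ _ hτ, ← mul_assoc,
        ENNReal.ofReal_rpow_of_pos hrn, ← ENNReal.ofReal_mul (by positivity), hre, hCdef]
  have hone : (volume (Metric.ball c r)) ^ τ *
      (volume (Metric.ball c r)) ^ (1/u.toReal - 1/p.toReal) = 1 := by
    rw [← ENNReal.rpow_add _ _ hvol0 hvolT,
        show τ + (1/u.toReal - 1/p.toReal) = 0 from by rw [hτdef]; ring, ENNReal.rpow_zero]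
  have h1 : ∀ j : ℕ,
      (∫⁻ x in dyadicCube n m k,
          ENNReal.ofReal (‖lpPiece n Φ φ f j x‖ ^ p.toReal)) ^ (1/p.toReal)
        ≤ (volume (Metric.ball c r)) ^ τ * morreyNorm n p u (lpPiece n Φ φ f j) := by
    intro j
    have hmor : (volume (Metric.ball c r)) ^ (1/u.toReal - 1/p.toReal) *
        (∫⁻ y in Metric.ball c r,
          ENNReal.ofReal (‖lpPiece n Φ φ f j y‖ ^ p.toReal)) ^ (1/p.toReal)
        ≤ morreyNorm n p u (lpPiece n Φ φ f j) :=
      le_iSup_of_le c (le_iSup_of_le r (le_iSup_of_le hrpos le_rfl))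
    calc (∫⁻ x in dyadicCube n m k,
            ENNReal.ofReal (‖lpPiece n Φ φ f j x‖ ^ p.toReal)) ^ (1/p.toReal)
        ≤ (∫⁻ y in Metric.ball c r,
            ENNReal.ofReal (‖lpPiece n Φ φ f j y‖ ^ p.toReal)) ^ (1/p.toReal) :=
          ENNReal.rpow_le_rpow (lintegral_mono_set hsub) (by positivity)
      _ = ((volume (Metric.ball c r)) ^ τ *
            (volume (Metric.ball c r)) ^ (1/u.toReal - 1/p.toReal)) *
            (∫⁻ y in Metric.ball c r,
              ENNReal.ofReal (‖lpPiece n Φ φ f j y‖ ^ p.toReal)) ^ (1/p.toReal) := by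
          rw [hone, one_mul]
      _ = (volume (Metric.ball c r)) ^ τ *
            ((volume (Metric.ball c r)) ^ (1/u.toReal - 1/p.toReal) *
            (∫⁻ y in Metric.ball c r,
              ENNReal.ofReal (‖lpPiece n Φ φ f j y‖ ^ p.toReal)) ^ (1/p.toReal)) := by
          rw [mul_assoc]
      _ ≤ (volume (Metric.ball c r)) ^ τ * morreyNorm n p u (lpPiece n Φ φ f j) :=
          mul_le_mul_right hmor _
  have hterm : ∀ j : ℕ,
      ENNReal.ofReal ((2:ℝ) ^ ((m:ℝ) * n * τ)) *
        (if m ≤ (j : ℤ) then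
          ENNReal.ofReal ((2:ℝ) ^ ((j:ℝ) * s)) *
            (∫⁻ x in dyadicCube n m k,
              ENNReal.ofReal (‖lpPiece n Φ φ f j x‖ ^ p.toReal)) ^ (1/p.toReal)
          else 0)
      ≤ C * (ENNReal.ofReal ((2:ℝ) ^ ((j:ℝ) * s)) *
          morreyNorm n p u (lpPiece n Φ φ f j)) := by
    intro j
    by_cases hmj : m ≤ (j : ℤ)
    · rw [if_pos hmj]
      calc ENNReal.ofReal ((2:ℝ) ^ ((m:ℝ) * n * τ)) *
            (ENNReal.ofReal ((2:ℝ) ^ ((j:ℝ) * s)) *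
              (∫⁻ x in dyadicCube n m k,
                ENNReal.ofReal (‖lpPiece n Φ φ f j x‖ ^ p.toReal)) ^ (1/p.toReal))
          ≤ ENNReal.ofReal ((2:ℝ) ^ ((m:ℝ) * n * τ)) *
            (ENNReal.ofReal ((2:ℝ) ^ ((j:ℝ) * s)) *
              ((volume (Metric.ball c r)) ^ τ * morreyNorm n p u (lpPiece n Φ φ f j))) := by
            exact mul_le_mul_right (mul_le_mul_right (h1 j) _) _
        _ = (ENNReal.ofReal ((2:ℝ) ^ ((m:ℝ) * n * τ)) * (volume (Metric.ball c r)) ^ τ) *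
              (ENNReal.ofReal ((2:ℝ) ^ ((j:ℝ) * s)) *
                morreyNorm n p u (lpPiece n Φ φ f j)) := by ring
        _ = C * (ENNReal.ofReal ((2:ℝ) ^ ((j:ℝ) * s)) *
                morreyNorm n p u (lpPiece n Φ φ f j)) := by rw [hkey]
    · rw [if_neg hmj, mul_zero]
      exact zero_le
  calc ENNReal.ofReal ((2:ℝ) ^ ((m:ℝ) * ↑n * τ)) *
        ellq q (fun j => if m ≤ (j : ℤ) then
          ENNReal.ofReal ((2:ℝ) ^ ((j:ℝ) * s)) *
            (∫⁻ x in dyadicCube n m k,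
              ENNReal.ofReal (‖lpPiece n Φ φ f j x‖ ^ p.toReal)) ^ (1/p.toReal)
          else 0)
      = ellq q (fun j => ENNReal.ofReal ((2:ℝ) ^ ((m:ℝ) * ↑n * τ)) *
          (if m ≤ (j : ℤ) then
            ENNReal.ofReal ((2:ℝ) ^ ((j:ℝ) * s)) *
              (∫⁻ x in dyadicCube n m k,
                ENNReal.ofReal (‖lpPiece n Φ φ f j x‖ ^ p.toReal)) ^ (1/p.toReal)
            else 0)) := (ellq_const_mul' hq.ne' hq' _ _).symm
    _ ≤ ellq q (fun j => C * (ENNReal.ofReal ((2:ℝ) ^ ((j:ℝ) * s)) *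
          morreyNorm n p u (lpPiece n Φ φ f j))) := ellq_mono' hterm
    _ = C * ellq q (fun j => ENNReal.ofReal ((2:ℝ) ^ ((j:ℝ) * s)) *
          morreyNorm n p u (lpPiece n Φ φ f j)) := ellq_const_mul' hq.ne' hq' _ _
    _ = C * besovMorreyNorm n s p u q Φ φ f := rfl


end
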